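/- Define the sequence p₀ = 0 and p_k = s + Aᵀp_{k−1} − Eᵀ|r + Bᵀp_{k−1}| + Gᵀ|−γ + Fᵀp_{k−1}| in ℝⁿ. Under the assumptions A ≥ |B|E + |F|G and s ≥ Eᵀ|r| − Gᵀ|γ| (entrywise), with E, G entrywise nonnegative, one has p_kᵀx = J_k(x) for every k ∈ ℕ and every x ∈ ℝ₊ⁿ, where J₀ ≡ 0 and J_k(x) = min_{|u|≤Ex} max_{|w|≤Gx} [sᵀx + rᵀu − γᵀw + J_{k−1}(Ax + Bu + Fw)]. -/

import Mathlib

open Matrix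

private lemma box_opt {m : ℕ} (c b : Fin m → ℝ) (hb : ∀ i, 0 ≤ b i) :
    ∃ u : Fin m → ℝ, (∀ i, |u i| ≤ b i) ∧ c ⬝ᵥ u = (fun i => |c i|) ⬝ᵥ b ∧
      ∀ u' : Fin m → ℝ, (∀ i, |u' i| ≤ b i) → c ⬝ᵥ u' ≤ (fun i => |c i|) ⬝ᵥ b := by
  refine ⟨fun i => if 0 ≤ c i then b i else -b i, ?_, ?_, ?_⟩
  · intro i
    by_cases h : 0 ≤ c i <;> simp [h, abs_of_nonneg (hb i)]
  · unfold dotProduct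
    refine Finset.sum_congr rfl fun i _ => ?_
    by_cases h : 0 ≤ c i
    · simp [h, abs_of_nonneg h]
    · simp [h, abs_of_neg (lt_of_not_ge h)]
  · intro u' hu'
    refine Finset.sum_le_sum fun i _ => ?_
    calc c i * u' i ≤ |c i * u' i| := le_abs_self _
      _ = |c i| * |u' i| := abs_mul _ _
      _ ≤ |c i| * b i := mul_le_mul_of_nonneg_left (hu' i) (abs_nonneg _)

theorem stmt8 {n m l : ℕ}
    (A : Matrix (Fin n) (Fin n) ℝ) (B : Matrix (Fin n) (Fin m) ℝ)
    (F : Matrix (Fin n) (Fin l) ℝ)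
    (E : Matrix (Fin m) (Fin n) ℝ) (G : Matrix (Fin l) (Fin n) ℝ)
    (s : Fin n → ℝ) (r : Fin m → ℝ) (γ : Fin l → ℝ)
    (hE : ∀ i j, 0 ≤ E i j) (hG : ∀ i j, 0 ≤ G i j)
    (hA : ∀ i j, ((Matrix.of fun i j => |B i j|) * E) i j
        + ((Matrix.of fun i j => |F i j|) * G) i j ≤ A i j)
    (hs : ∀ i, (Eᵀ *ᵥ (fun j => |r j|)) i - (Gᵀ *ᵥ (fun j => |γ j|)) i ≤ s i)
    (p : ℕ → Fin n → ℝ)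
    (hp0 : p 0 = 0)
    (hpk : ∀ k, p (k+1) = s + Aᵀ *ᵥ (p k)
        - Eᵀ *ᵥ (fun i => |r i + (Bᵀ *ᵥ (p k)) i|)
        + Gᵀ *ᵥ (fun i => |-γ i + (Fᵀ *ᵥ (p k)) i|))
    (J : ℕ → (Fin n → ℝ) → ℝ)
    (hJ0 : ∀ x, J 0 x = 0)
    (hJ : ∀ k (x : Fin n → ℝ), (∀ i, 0 ≤ x i) →
      IsLeast {v : ℝ | ∃ u : Fin m → ℝ, (∀ i, |u i| ≤ (E *ᵥ x) i) ∧
          IsGreatest {z : ℝ | ∃ w : Fin l → ℝ, (∀ i, |w i| ≤ (G *ᵥ x) i) ∧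
              z = s ⬝ᵥ x + r ⬝ᵥ u - γ ⬝ᵥ w + J k (A *ᵥ x + B *ᵥ u + F *ᵥ w)} v}
        (J (k+1) x)) :
    ∀ k (x : Fin n → ℝ), (∀ i, 0 ≤ x i) → p k ⬝ᵥ x = J k x := by
  intro k
  induction k with
  | zero => intro x hx; simp [hp0, hJ0]
  | succ k ih =>
    intro x hx
    set q := p k with hq
    set c : Fin m → ℝ := fun i => r i + (Bᵀ *ᵥ q) i with hc
    set d : Fin l → ℝ := fun i => -γ i + (Fᵀ *ᵥ q) i with hd
    have hEx : ∀ i, 0 ≤ (E *ᵥ x) i := by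
      intro i
      simp only [Matrix.mulVec, dotProduct]
      exact Finset.sum_nonneg fun j _ => mul_nonneg (hE i j) (hx j)
    have hGx : ∀ i, 0 ≤ (G *ᵥ x) i := by
      intro i
      simp only [Matrix.mulVec, dotProduct]
      exact Finset.sum_nonneg fun j _ => mul_nonneg (hG i j) (hx j)
    -- nonnegativity of next state
    have hy : ∀ (u : Fin m → ℝ) (w : Fin l → ℝ), (∀ i, |u i| ≤ (E *ᵥ x) i) →
        (∀ i, |w i| ≤ (G *ᵥ x) i) → ∀ i, 0 ≤ (A *ᵥ x + B *ᵥ u + F *ᵥ w) i := by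
      intro u w hu hw i
      have h1 : (((Matrix.of fun i j => |B i j|) * E) *ᵥ x) i + (((Matrix.of fun i j => |F i j|) * G) *ᵥ x) i
          ≤ (A *ᵥ x) i := by
        have : ∀ j, ((Matrix.of fun i j => |B i j|) * E) i j * x j
            + ((Matrix.of fun i j => |F i j|) * G) i j * x j ≤ A i j * x j := fun j => by
          have := mul_le_mul_of_nonneg_right (hA i j) (hx j)
          linarith [this]
        simpa [Matrix.mulVec, dotProduct, ← Finset.sum_add_distrib]
          using Finset.sum_le_sum (fun j _ => this j)
      have h2 : -((((Matrix.of fun i j => |B i j|) * E) *ᵥ x) i) ≤ (B *ᵥ u) i := by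
        rw [← Matrix.mulVec_mulVec]
        have : ∀ j, -(|B i j| * (E *ᵥ x) j) ≤ B i j * u j := fun j => by
          calc -(|B i j| * (E *ᵥ x) j) ≤ -|B i j * u j| := by
                have := mul_le_mul_of_nonneg_left (hu j) (abs_nonneg (B i j))
                rw [← abs_mul] at this; linarith
            _ ≤ B i j * u j := neg_abs_le _
        simpa [Matrix.mulVec, dotProduct, Finset.sum_neg_distrib]
          using Finset.sum_le_sum (fun j _ => this j)
      have h3 : -((((Matrix.of fun i j => |F i j|) * G) *ᵥ x) i) ≤ (F *ᵥ w) i := by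
        rw [← Matrix.mulVec_mulVec]
        have : ∀ j, -(|F i j| * (G *ᵥ x) j) ≤ F i j * w j := fun j => by
          calc -(|F i j| * (G *ᵥ x) j) ≤ -|F i j * w j| := by
                have := mul_le_mul_of_nonneg_left (hw j) (abs_nonneg (F i j))
                rw [← abs_mul] at this; linarith
            _ ≤ F i j * w j := neg_abs_le _
        simpa [Matrix.mulVec, dotProduct, Finset.sum_neg_distrib]
          using Finset.sum_le_sum (fun j _ => this j)
      simp only [Pi.add_apply]
      linarith
    -- key reformulation of the payoff
    have key : ∀ (u : Fin m → ℝ) (w : Fin l → ℝ), (∀ i, |u i| ≤ (E *ᵥ x) i) →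
        (∀ i, |w i| ≤ (G *ᵥ x) i) →
        s ⬝ᵥ x + r ⬝ᵥ u - γ ⬝ᵥ w + J k (A *ᵥ x + B *ᵥ u + F *ᵥ w)
          = (s + Aᵀ *ᵥ q) ⬝ᵥ x + c ⬝ᵥ u + d ⬝ᵥ w := by
      intro u w hu hw
      rw [← ih _ (hy u w hu hw)]
      have e1 : q ⬝ᵥ (A *ᵥ x) = (Aᵀ *ᵥ q) ⬝ᵥ x := by
        rw [Matrix.dotProduct_mulVec, Matrix.mulVec_transpose]
      have e2 : q ⬝ᵥ (B *ᵥ u) = (Bᵀ *ᵥ q) ⬝ᵥ u := by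
        rw [Matrix.dotProduct_mulVec, Matrix.mulVec_transpose]
      have e3 : q ⬝ᵥ (F *ᵥ w) = (Fᵀ *ᵥ q) ⬝ᵥ w := by
        rw [Matrix.dotProduct_mulVec, Matrix.mulVec_transpose]
      have e4 : c ⬝ᵥ u = r ⬝ᵥ u + (Bᵀ *ᵥ q) ⬝ᵥ u := by
        simp [hc, dotProduct, add_mul, Finset.sum_add_distrib]
      have e5 : d ⬝ᵥ w = -(γ ⬝ᵥ w) + (Fᵀ *ᵥ q) ⬝ᵥ w := by
        simp [hd, dotProduct, add_mul, Finset.sum_add_distrib]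
      simp only [dotProduct_add, add_dotProduct, e1, e2, e3, e4, e5]
      ring
    -- value of p (k+1) ⬝ᵥ x
    obtain ⟨u₀, hu₀f, hu₀v, hu₀min⟩ := box_opt (fun i => -c i) (E *ᵥ x) hEx
    obtain ⟨w₀, hw₀f, hw₀v, hw₀max⟩ := box_opt d (G *ᵥ x) hGx
    have hcu₀ : c ⬝ᵥ u₀ = -((fun i => |c i|) ⬝ᵥ (E *ᵥ x)) := by
      have : c ⬝ᵥ u₀ = -((fun i => -c i) ⬝ᵥ u₀) := by
        simp [dotProduct, Finset.sum_neg_distrib]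
      rw [this, hu₀v]; simp
    have hcmin : ∀ u : Fin m → ℝ, (∀ i, |u i| ≤ (E *ᵥ x) i) →
        -((fun i => |c i|) ⬝ᵥ (E *ᵥ x)) ≤ c ⬝ᵥ u := by
      intro u hu
      have := hu₀min u hu
      have h2 : (fun i => -c i) ⬝ᵥ u = -(c ⬝ᵥ u) := by
        simp [dotProduct, Finset.sum_neg_distrib]
      rw [h2] at this
      simpa using neg_le_neg this
    have hT : p (k+1) ⬝ᵥ x = (s + Aᵀ *ᵥ q) ⬝ᵥ x
        - (fun i => |c i|) ⬝ᵥ (E *ᵥ x) + (fun i => |d i|) ⬝ᵥ (G *ᵥ x) := by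
      rw [hpk k]
      have f1 : (Eᵀ *ᵥ (fun i => |r i + (Bᵀ *ᵥ p k) i|)) ⬝ᵥ x
          = (fun i => |c i|) ⬝ᵥ (E *ᵥ x) := by
        rw [Matrix.mulVec_transpose, ← Matrix.dotProduct_mulVec]
      have f2 : (Gᵀ *ᵥ (fun i => |-γ i + (Fᵀ *ᵥ p k) i|)) ⬝ᵥ x
          = (fun i => |d i|) ⬝ᵥ (G *ᵥ x) := by
        rw [Matrix.mulVec_transpose, ← Matrix.dotProduct_mulVec]
      simp only [add_dotProduct, sub_dotProduct, ← hq, f1, f2]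
      simp only [← hq] at f1 f2
      rw [f1, f2]
    have hleast : IsLeast {v : ℝ | ∃ u : Fin m → ℝ, (∀ i, |u i| ≤ (E *ᵥ x) i) ∧
          IsGreatest {z : ℝ | ∃ w : Fin l → ℝ, (∀ i, |w i| ≤ (G *ᵥ x) i) ∧
              z = s ⬝ᵥ x + r ⬝ᵥ u - γ ⬝ᵥ w + J k (A *ᵥ x + B *ᵥ u + F *ᵥ w)} v}
        (p (k+1) ⬝ᵥ x) := by
      constructor
      · refine ⟨u₀, hu₀f, ⟨⟨w₀, hw₀f, ?_⟩, ?_⟩⟩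
        · rw [key u₀ w₀ hu₀f hw₀f, hT, hcu₀, hw₀v]; ring
        · rintro z ⟨w, hwf, rfl⟩
          rw [key u₀ w hu₀f hwf, hT, hcu₀]
          have := hw₀max w hwf
          linarith
      · rintro v ⟨u, huf, hvg, hvub⟩
        have hmem : (s ⬝ᵥ x + r ⬝ᵥ u - γ ⬝ᵥ w₀ + J k (A *ᵥ x + B *ᵥ u + F *ᵥ w₀)) ∈
            {z : ℝ | ∃ w : Fin l → ℝ, (∀ i, |w i| ≤ (G *ᵥ x) i) ∧
              z = s ⬝ᵥ x + r ⬝ᵥ u - γ ⬝ᵥ w + J k (A *ᵥ x + B *ᵥ u + F *ᵥ w)} :=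
          ⟨w₀, hw₀f, rfl⟩
        have h1 := hvub hmem
        rw [key u w₀ huf hw₀f, hw₀v] at h1
        have h2 := hcmin u huf
        rw [hT]
        linarith
    exact hleast.unique (hJ k x hx)
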